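/- arXiv:1804.02416 — 2 statements merged into one kernel-verified Lean document; each statement's English description precedes it below -/
import Mathlib

section
/- Let H be a Hopf G-coalgebra over a field k in which every antipode map S_α : H_α → H_{α⁻¹} is bijective, and let α, β ∈ G. Regard H_α ⊗_k H_{αβ} as a left H_{αβ}-module by left multiplication on the second tensor factor (h·(m⊗x) = m⊗hx), and regard H_α ⊗_k H_β as a left H_{αβ}-module via Δ_{α,β}. Then the k-linear map φ^l_{α,β} : H_α ⊗ H_{αβ} → H_α ⊗ H_β, m ⊗ h ↦ h_{(1)}m ⊗ h_{(2)} (where Δ_{α,β}(h) = h_{(1)}⊗h_{(2)}), is an isomorphism of H_{αβ}-modules, with inverse ψ^l_{α,β} : H_α ⊗ H_β → H_α ⊗ H_{αβ}, x ⊗ y ↦ S_α⁻¹(y_{(1)})x ⊗ y_{(2)}, where Δ_{α⁻¹,αβ}(y) = y_{(1)} ⊗ y_{(2)} (using H_β = H_{α⁻¹(αβ)}) and S_α⁻¹ : H_{α⁻¹} → H_α denotes the inverse of the antipode S_α. -/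
open scoped TensorProduct

/-- Transport along an equality of indices, as an algebra isomorphism. -/
def castAlg (k : Type) [CommSemiring k] {G : Type} {H : G → Type}
    [∀ γ : G, Ring (H γ)] [∀ γ : G, Algebra k (H γ)]
    {γ γ' : G} (h : γ = γ') : H γ ≃ₐ[k] H γ' := by
  subst h; exact AlgEquiv.refl

/-- A Hopf `G`-coalgebra over a field `k`. -/
structure HopfGCoalgebra (k G : Type) [Field k] [Group G] (H : G → Type)
    [∀ γ : G, Ring (H γ)] [∀ γ : G, Algebra k (H γ)] where
  Δ : ∀ α β : G, H (α * β) →ₐ[k] (H α ⊗[k] H β)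
  ε : H (1 : G) →ₐ[k] k
  S : ∀ γ : G, H γ →ₗ[k] H γ⁻¹
  coassoc : ∀ (α β γ : G) (x : H (α * β * γ)),
    (TensorProduct.map (Δ α β).toLinearMap LinearMap.id) (Δ (α * β) γ x)
      = (TensorProduct.assoc k (H α) (H β) (H γ)).symm
          ((TensorProduct.map LinearMap.id (Δ β γ).toLinearMap)
            (Δ α (β * γ) (castAlg k (mul_assoc α β γ) x)))
  counit_right : ∀ (α : G) (x : H (α * 1)),
    (TensorProduct.rid k (H α)) ((TensorProduct.map LinearMap.id ε.toLinearMap) (Δ α 1 x))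
      = castAlg k (mul_one α) x
  counit_left : ∀ (α : G) (x : H (1 * α)),
    (TensorProduct.lid k (H α)) ((TensorProduct.map ε.toLinearMap LinearMap.id) (Δ 1 α x))
      = castAlg k (one_mul α) x
  antipode_left : ∀ (α : G) (x : H (α⁻¹ * α)),
    (LinearMap.mul' k (H α))
      ((TensorProduct.map ((castAlg k (inv_inv α)).toLinearMap ∘ₗ S α⁻¹) LinearMap.id)
        (Δ α⁻¹ α x))
      = ε (castAlg k (inv_mul_cancel α) x) • 1
  antipode_right : ∀ (α : G) (x : H (α * α⁻¹)),
    (LinearMap.mul' k (H α))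
      ((TensorProduct.map LinearMap.id ((castAlg k (inv_inv α)).toLinearMap ∘ₗ S α⁻¹))
        (Δ α α⁻¹ x))
      = ε (castAlg k (mul_inv_cancel α) x) • 1

namespace HopfGCoalgebra

variable {k G : Type} [Field k] [Group G] {H : G → Type}
  [∀ γ : G, Ring (H γ)] [∀ γ : G, Algebra k (H γ)]

/-- A family of linear forms is a right `G`-integral. -/
def IsRightIntegral (D : HopfGCoalgebra k G H) (μ : ∀ γ : G, H γ →ₗ[k] k) : Prop :=
  ∀ (α β : G) (x : H (α * β)),
    (TensorProduct.lid k (H β)) ((TensorProduct.map (μ α) LinearMap.id) (D.Δ α β x))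
      = μ (α * β) x • 1

/-- A family of linear forms is a left `G`-integral. -/
def IsLeftIntegral (D : HopfGCoalgebra k G H) (μ : ∀ γ : G, H γ →ₗ[k] k) : Prop :=
  ∀ (α β : G) (x : H (α * β)),
    (TensorProduct.rid k (H α)) ((TensorProduct.map LinearMap.id (μ β)) (D.Δ α β x))
      = μ (α * β) x • 1

/-- A family of invertible elements is a pivot. -/
structure IsPivot (D : HopfGCoalgebra k G H) (g : ∀ γ : G, (H γ)ˣ) : Prop where
  delta : ∀ α β : G, D.Δ α β (g (α * β) : H (α * β)) = (g α : H α) ⊗ₜ[k] (g β : H β)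
  counit : D.ε (g 1 : H 1) = 1
  antipode : ∀ (α : G) (x : H α),
    castAlg k (inv_inv α) (D.S α⁻¹ (D.S α x)) = (g α : H α) * x * ((g α)⁻¹ : (H α)ˣ)

/-- `H` is unimodular if `H₁` admits a nonzero two-sided cointegral. -/
def IsUnimodular (D : HopfGCoalgebra k G H) : Prop :=
  ∃ Λ : H 1, Λ ≠ 0 ∧ ∀ h : H 1, h * Λ = D.ε h • Λ ∧ Λ * h = D.ε h • Λ

/-- A `G`-comodulus for a right `G`-integral `μ`. -/
structure IsComodulus (D : HopfGCoalgebra k G H) (μ : ∀ γ : G, H γ →ₗ[k] k)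
    (a : ∀ γ : G, (H γ)ˣ) : Prop where
  delta : ∀ α β : G, D.Δ α β (a (α * β) : H (α * β)) = (a α : H α) ⊗ₜ[k] (a β : H β)
  counit : D.ε (a 1 : H 1) = 1
  rel : ∀ (α β : G) (x : H (α * β)),
    (TensorProduct.rid k (H α)) ((TensorProduct.map LinearMap.id (μ β)) (D.Δ α β x))
      = μ (α * β) x • (a α : H α)

end HopfGCoalgebra

set_option linter.unusedSectionVars false
namespace HopfGCoalgebra

variable {k G : Type} [Field k] [Group G] {H : G → Type}
  [∀ γ : G, Ring (H γ)] [∀ γ : G, Algebra k (H γ)]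

lemma castAlg_refl {γ : G} (h : γ = γ) (x : H γ) : castAlg k h x = x := rfl

lemma castAlg_toLinearMap_refl {γ : G} (h : γ = γ) :
    (castAlg (H := H) k h).toLinearMap = LinearMap.id := rfl

lemma castAlg_castAlg {a b c : G} (h1 : a = b) (h2 : b = c) (x : H a) :
    castAlg k h2 (castAlg k h1 x) = castAlg k (h1.trans h2) x := by
  subst h1; subst h2; rfl

variable (D : HopfGCoalgebra k G H)

lemma S_cast {a b : G} (hab : a = b) (x : H a) :
    D.S b (castAlg k hab x) = castAlg k (congrArg Inv.inv hab) (D.S a x) := by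
  subst hab; rfl

lemma Δ_cast {a a' b b' : G} (ha : a = a') (hb : b = b') (hab : a * b = a' * b') (x : H (a * b)) :
    D.Δ a' b' (castAlg k hab x)
      = TensorProduct.map (castAlg k ha).toLinearMap (castAlg k hb).toLinearMap (D.Δ a b x) := by
  subst ha; subst hb
  rw [castAlg_refl, castAlg_toLinearMap_refl, castAlg_toLinearMap_refl,
    TensorProduct.map_id, LinearMap.id_apply]

end HopfGCoalgebra
namespace HopfGCoalgebra
variable {k G : Type} [Field k] [Group G] {H : G → Type}
  [∀ γ : G, Ring (H γ)] [∀ γ : G, Algebra k (H γ)]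
variable (D : HopfGCoalgebra k G H)

/-- generalized counit-left -/
lemma counit_left' {u : G} (hu : u = 1) (c : G) (hc : u * c = c) (x : H (u * c)) :
    (TensorProduct.lid k (H c))
      ((TensorProduct.map (D.ε.toLinearMap ∘ₗ (castAlg k hu).toLinearMap) LinearMap.id)
        (D.Δ u c x))
      = castAlg k hc x := by
  subst hu
  exact D.counit_left c x

/-- generalized counit-right -/
lemma counit_right' {e : G} (he : e = 1) (a : G) (ha : a * e = a) (x : H (a * e)) :
    (TensorProduct.rid k (H a))
      ((TensorProduct.map LinearMap.id (D.ε.toLinearMap ∘ₗ (castAlg k he).toLinearMap))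
        (D.Δ a e x))
      = castAlg k ha x := by
  subst he
  exact D.counit_right a x

end HopfGCoalgebra
namespace HopfGCoalgebra
variable {k G : Type} [Field k] [Group G] {H : G → Type}
  [∀ γ : G, Ring (H γ)] [∀ γ : G, Algebra k (H γ)]
variable (D : HopfGCoalgebra k G H)

lemma castAlg_irrel {a b : G} (h h' : a = b) (x : H a) :
    castAlg k h x = castAlg k h' x := rfl

/-- `∑ S(w₍₁₎) w₍₂₎ = ε(w) 1` for `w ∈ H (γ γ⁻¹)`. -/
lemma antipode_left' (γ : G) (w : H (γ * γ⁻¹)) :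
    (LinearMap.mul' k (H γ⁻¹))
      ((TensorProduct.map (D.S γ) LinearMap.id) (D.Δ γ γ⁻¹ w))
      = D.ε (castAlg k (mul_inv_cancel γ) w) • 1 := by
  have hinv : γ = γ⁻¹⁻¹ := (inv_inv γ).symm
  have h1 : γ * γ⁻¹ = γ⁻¹⁻¹ * γ⁻¹ := by rw [← hinv]
  have hx := D.antipode_left γ⁻¹ (castAlg k h1 w)
  rw [D.Δ_cast hinv rfl h1 w] at hx
  rw [castAlg_castAlg, castAlg_irrel _ (mul_inv_cancel γ)] at hx
  obtain ⟨s, hs⟩ := TensorProduct.exists_finset (D.Δ γ γ⁻¹ w)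
  rw [hs] at hx ⊢
  simp only [map_sum, TensorProduct.map_tmul, LinearMap.comp_apply, LinearMap.id_apply,
    LinearMap.mul'_apply, AlgEquiv.toLinearMap_apply, castAlg_toLinearMap_refl,
    D.S_cast hinv, castAlg_castAlg, castAlg_refl] at hx ⊢
  exact hx

/-- `∑ v₍₁₎ S(v₍₂₎) = ε(v) 1` for `v ∈ H (γ⁻¹ γ)`. -/
lemma antipode_right' (γ : G) (v : H (γ⁻¹ * γ)) :
    (LinearMap.mul' k (H γ⁻¹))
      ((TensorProduct.map LinearMap.id (D.S γ)) (D.Δ γ⁻¹ γ v))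
      = D.ε (castAlg k (inv_mul_cancel γ) v) • 1 := by
  have hinv : γ = γ⁻¹⁻¹ := (inv_inv γ).symm
  have h1 : γ⁻¹ * γ = γ⁻¹ * γ⁻¹⁻¹ := by rw [← hinv]
  have hx := D.antipode_right γ⁻¹ (castAlg k h1 v)
  rw [D.Δ_cast rfl hinv h1 v] at hx
  rw [castAlg_castAlg, castAlg_irrel _ (inv_mul_cancel γ)] at hx
  obtain ⟨s, hs⟩ := TensorProduct.exists_finset (D.Δ γ⁻¹ γ v)
  rw [hs] at hx ⊢
  simp only [map_sum, TensorProduct.map_tmul, LinearMap.comp_apply, LinearMap.id_apply,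
    LinearMap.mul'_apply, AlgEquiv.toLinearMap_apply, castAlg_toLinearMap_refl,
    D.S_cast hinv, castAlg_castAlg, castAlg_refl] at hx ⊢
  exact hx

end HopfGCoalgebra
namespace HopfGCoalgebra
variable {k G : Type} [Field k] [Group G] {H : G → Type}
  [∀ γ : G, Ring (H γ)] [∀ γ : G, Algebra k (H γ)]
variable (D : HopfGCoalgebra k G H)

lemma S_one (γ : G) : D.S γ 1 = 1 := by
  have h := D.antipode_left' γ 1
  rw [map_one, Algebra.TensorProduct.one_def] at h
  simpa using h

/-- helper: pushing a `smulRight`-type map through a tensor factor. -/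
lemma Hlid {M N A : Type} [AddCommMonoid M] [AddCommMonoid N] [Module k M] [Module k N]
    [Ring A] [Algebra k A] (e : M →ₗ[k] k) (t : M ⊗[k] N) :
    TensorProduct.map (e.smulRight (1 : A)) LinearMap.id t
      = (1 : A) ⊗ₜ[k] (TensorProduct.lid k N ((TensorProduct.map e LinearMap.id) t)) := by
  induction t with
  | zero => simp
  | tmul m n =>
    simp only [TensorProduct.map_tmul, LinearMap.smulRight_apply, LinearMap.id_apply,
      TensorProduct.lid_tmul]
    rw [TensorProduct.smul_tmul]
  | add x y hx hy => simp [hx, hy, TensorProduct.tmul_add]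

/-- helper: `map F id ∘ assoc.symm` on `a ⊗ t`. -/
lemma Hassoc {A B C E : Type} [AddCommMonoid A] [AddCommMonoid B] [AddCommMonoid C]
    [AddCommMonoid E] [Module k A] [Module k B] [Module k C] [Module k E]
    (F : A ⊗[k] B →ₗ[k] E) (a : A) (t : B ⊗[k] C) :
    TensorProduct.map F LinearMap.id ((TensorProduct.assoc k A B C).symm (a ⊗ₜ[k] t))
      = TensorProduct.map (F ∘ₗ (TensorProduct.mk k A B a)) LinearMap.id t := by
  induction t with
  | zero => simp
  | tmul b c => simp [TensorProduct.assoc_symm_tmul]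
  | add x y hx hy => simp [TensorProduct.tmul_add, hx, hy]

/-- helper: `map (mulRight r) id t = t * (r ⊗ 1)`. -/
lemma Hmul {A B : Type} [Ring A] [Ring B] [Algebra k A] [Algebra k B]
    (r : A) (t : A ⊗[k] B) :
    TensorProduct.map (LinearMap.mulRight k r) LinearMap.id t = t * (r ⊗ₜ[k] (1 : B)) := by
  induction t with
  | zero => simp
  | tmul a b => simp [Algebra.TensorProduct.tmul_mul_tmul]
  | add x y hx hy => simp [add_mul, hx, hy]

end HopfGCoalgebra
namespace HopfGCoalgebra
variable {k G : Type} [Field k] [Group G] {H : G → Type}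
  [∀ γ : G, Ring (H γ)] [∀ γ : G, Algebra k (H γ)]
variable (D : HopfGCoalgebra k G H)

/-- The key collapse lemma: if `F` kills `Δ_{a,b}` into `ε·1`, then applying `F` to the
first two legs of a three-fold coproduct gives `1 ⊗ x`. -/
lemma key {a b : G} (c : G) (h1 : a * b = 1) {E : Type} [Ring E] [Algebra k E]
    (F : (H a ⊗[k] H b) →ₗ[k] E)
    (hF : ∀ v : H (a * b), F (D.Δ a b v) = D.ε (castAlg k h1 v) • (1 : E))
    (hc : a * (b * c) = c) (x : H (a * (b * c))) :
    (TensorProduct.map F LinearMap.id)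
      ((TensorProduct.assoc k (H a) (H b) (H c)).symm
        ((TensorProduct.map LinearMap.id (D.Δ b c).toLinearMap) (D.Δ a (b * c) x)))
      = (1 : E) ⊗ₜ[k] castAlg k hc x := by
  have h0 : a * (b * c) = a * b * c := (mul_assoc a b c).symm
  have hco := D.coassoc a b c (castAlg k h0 x)
  rw [castAlg_castAlg, castAlg_refl] at hco
  rw [← hco]
  have hFΔ : F ∘ₗ (D.Δ a b).toLinearMap
      = ((D.ε.toLinearMap ∘ₗ (castAlg k h1).toLinearMap).smulRight (1 : E)) := by
    ext v
    simp only [LinearMap.comp_apply, AlgHom.toLinearMap_apply, LinearMap.smulRight_apply,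
      AlgEquiv.toLinearMap_apply]
    exact hF v
  obtain ⟨s, hs⟩ := TensorProduct.exists_finset (D.Δ (a * b) c (castAlg k h0 x))
  rw [hs, map_sum, map_sum]
  simp only [TensorProduct.map_tmul, LinearMap.id_apply]
  have : ∀ p : H (a * b) × H c, F (D.Δ a b p.1) ⊗ₜ[k] p.2
      = ((D.ε.toLinearMap ∘ₗ (castAlg k h1).toLinearMap).smulRight (1 : E)) p.1 ⊗ₜ[k] p.2 := by
    intro p
    rw [hF]
    simp [LinearMap.smulRight_apply]
  calc ∑ p ∈ s, F (D.Δ a b p.1) ⊗ₜ[k] p.2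
      = (TensorProduct.map ((D.ε.toLinearMap ∘ₗ (castAlg k h1).toLinearMap).smulRight (1 : E))
          LinearMap.id) (∑ p ∈ s, p.1 ⊗ₜ[k] p.2) := by
        rw [map_sum]
        simp only [TensorProduct.map_tmul, LinearMap.id_apply]
        exact Finset.sum_congr rfl fun p _ => this p
    _ = (1 : E) ⊗ₜ[k] (TensorProduct.lid k (H c)
          ((TensorProduct.map (D.ε.toLinearMap ∘ₗ (castAlg k h1).toLinearMap) LinearMap.id)
            (∑ p ∈ s, p.1 ⊗ₜ[k] p.2))) := Hlid _ _
    _ = (1 : E) ⊗ₜ[k] castAlg k hc x := by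
        rw [← hs, D.counit_left' h1 c (by rw [h1, one_mul]) (castAlg k h0 x),
          castAlg_castAlg, castAlg_irrel _ hc]

end HopfGCoalgebra
namespace HopfGCoalgebra
variable {k G : Type} [Field k] [Group G] {H : G → Type}
  [∀ γ : G, Ring (H γ)] [∀ γ : G, Algebra k (H γ)]
variable (D : HopfGCoalgebra k G H)

set_option synthInstance.maxHeartbeats 1000000 in
lemma expand {a b : G} (c : G) {E : Type} [AddCommMonoid E] [Module k E]
    (F : (H a ⊗[k] H b) →ₗ[k] E) {ι : Type} (s : Finset ι)
    (f : ι → H a) (g : ι → H (b * c)) :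
    (TensorProduct.map F LinearMap.id)
      ((TensorProduct.assoc k (H a) (H b) (H c)).symm
        ((TensorProduct.map LinearMap.id (D.Δ b c).toLinearMap) (∑ i ∈ s, f i ⊗ₜ[k] g i)))
      = ∑ i ∈ s, (TensorProduct.map (F ∘ₗ TensorProduct.mk k (H a) (H b) (f i)) LinearMap.id)
          (D.Δ b c (g i)) := by
  rw [map_sum, map_sum, map_sum]
  refine Finset.sum_congr rfl fun i _ => ?_
  rw [TensorProduct.map_tmul, LinearMap.id_apply, AlgHom.toLinearMap_apply, Hassoc]

lemma key' {a b : G} (c : G) (h1 : a * b = 1) {E : Type} [Ring E] [Algebra k E]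
    (F : (H a ⊗[k] H b) →ₗ[k] E)
    (hF : ∀ v : H (a * b), F (D.Δ a b v) = D.ε (castAlg k h1 v) • (1 : E))
    (hc : a * (b * c) = c) (x : H (a * (b * c))) {ι : Type} (s : Finset ι)
    (f : ι → H a) (g : ι → H (b * c)) (hs : D.Δ a (b * c) x = ∑ i ∈ s, f i ⊗ₜ[k] g i) :
    ∑ i ∈ s, (TensorProduct.map (F ∘ₗ TensorProduct.mk k (H a) (H b) (f i)) LinearMap.id)
        (D.Δ b c (g i))
      = (1 : E) ⊗ₜ[k] castAlg k hc x := by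
  rw [← D.key c h1 F hF hc x, hs]
  exact (D.expand c F s f g).symm

end HopfGCoalgebra
namespace HopfGCoalgebra
variable {k G : Type} [Field k] [Group G] {H : G → Type}
  [∀ γ : G, Ring (H γ)] [∀ γ : G, Algebra k (H γ)]
variable (D : HopfGCoalgebra k G H)

set_option maxHeartbeats 1000000 in
set_option synthInstance.maxHeartbeats 1000000 in
/-- The antipode is anti-multiplicative. -/
lemma S_mul (γ : G) (x y : H γ) : D.S γ (x * y) = D.S γ y * D.S γ x := by
  classical
  have hinv : γ⁻¹ * γ = 1 := inv_mul_cancel γ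
  have h0 : γ = γ * (γ⁻¹ * γ) := by rw [hinv, mul_one]
  have hc : γ * (γ⁻¹ * γ) = γ := by rw [hinv, mul_one]
  obtain ⟨sx, hsx⟩ := TensorProduct.exists_finset (D.Δ γ (γ⁻¹ * γ) (castAlg k h0 x))
  obtain ⟨sy, hsy⟩ := TensorProduct.exists_finset (D.Δ γ (γ⁻¹ * γ) (castAlg k h0 y))
  set ε₁ : H (γ⁻¹ * γ) → k := fun v => D.ε (castAlg k hinv v) with hε₁
  -- the F for `key'`
  set Fal : (H γ ⊗[k] H γ⁻¹) →ₗ[k] H γ⁻¹ :=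
    LinearMap.mul' k (H γ⁻¹) ∘ₗ TensorProduct.map (D.S γ) LinearMap.id with hFal
  have hFalΔ : ∀ v : H (γ * γ⁻¹),
      Fal (D.Δ γ γ⁻¹ v) = D.ε (castAlg k (mul_inv_cancel γ) v) • (1 : H γ⁻¹) := fun v => by
    rw [hFal, LinearMap.comp_apply]; exact D.antipode_left' γ v
  -- counit recovery
  have hrec : ∀ z : H γ, ∀ s : Finset (H γ × H (γ⁻¹ * γ)),
      D.Δ γ (γ⁻¹ * γ) (castAlg k h0 z) = ∑ p ∈ s, p.1 ⊗ₜ[k] p.2 →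
      ∑ p ∈ s, ε₁ p.2 • p.1 = z := by
    intro z s hsz
    have := D.counit_right' hinv γ hc (castAlg k h0 z)
    rw [hsz, castAlg_castAlg, castAlg_refl, map_sum, map_sum] at this
    simpa only [TensorProduct.map_tmul, LinearMap.id_apply, LinearMap.comp_apply,
      AlgHom.toLinearMap_apply, AlgEquiv.toLinearMap_apply, TensorProduct.rid_tmul] using this
  have hxrec := hrec x sx hsx
  have hyrec := hrec y sy hsy
  -- the antipode-insertion map g
  set g : H (γ⁻¹ * γ) →ₗ[k] H γ⁻¹ :=
    LinearMap.mul' k (H γ⁻¹) ∘ₗ TensorProduct.map LinearMap.id (D.S γ)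
      ∘ₗ (D.Δ γ⁻¹ γ).toLinearMap with hgdef
  have hg : ∀ v, g v = ε₁ v • 1 := fun v => by
    rw [hgdef]
    simp only [LinearMap.comp_apply, AlgHom.toLinearMap_apply]
    exact D.antipode_right' γ v
  -- step 1: expand S y * S x
  have e1 : D.S γ y * D.S γ x
      = ∑ q ∈ sy, ∑ p ∈ sx, D.S γ q.1 * D.S γ p.1 * g (p.2 * q.2) := by
    conv_lhs => rw [← hxrec, ← hyrec]
    rw [map_sum, map_sum, Finset.sum_mul_sum]
    refine Finset.sum_congr rfl fun q _ => Finset.sum_congr rfl fun p _ => ?_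
    rw [map_smul, map_smul, smul_mul_smul_comm, hg]
    have hmul : ε₁ (p.2 * q.2) = ε₁ q.2 * ε₁ p.2 := by
      rw [hε₁]; simp only [map_mul]; exact mul_comm _ _
    rw [mul_smul_comm, mul_one, hmul]
  -- outer-collapse map
  set C' : (H γ⁻¹ ⊗[k] H γ) →ₗ[k] H γ⁻¹ :=
    LinearMap.mul' k (H γ⁻¹)
      ∘ₗ TensorProduct.map LinearMap.id (D.S γ ∘ₗ LinearMap.mulLeft k x) with hC'
  -- step 2: per-q inner collapse
  have e2 : ∀ q : H γ × H (γ⁻¹ * γ),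
      ∑ p ∈ sx, D.S γ q.1 * D.S γ p.1 * g (p.2 * q.2)
        = C' ((TensorProduct.map (Fal ∘ₗ TensorProduct.mk k (H γ) (H γ⁻¹) q.1) LinearMap.id)
            (D.Δ γ⁻¹ γ q.2)) := by
    intro q
    obtain ⟨tq, htq⟩ := TensorProduct.exists_finset (D.Δ γ⁻¹ γ q.2)
    -- inner map Gq and Cq
    set Gq : H γ →ₗ[k] H γ⁻¹ :=
      ∑ r ∈ tq, LinearMap.mulLeft k r.1 ∘ₗ D.S γ ∘ₗ LinearMap.mulRight k r.2 with hGq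
    set Cq : (H γ⁻¹ ⊗[k] H γ) →ₗ[k] H γ⁻¹ :=
      LinearMap.mul' k (H γ⁻¹)
        ∘ₗ TensorProduct.map (LinearMap.mulLeft k (D.S γ q.1)) Gq with hCq
    have perp : ∀ p : H γ × H (γ⁻¹ * γ),
        D.S γ q.1 * D.S γ p.1 * g (p.2 * q.2)
          = Cq ((TensorProduct.map (Fal ∘ₗ TensorProduct.mk k (H γ) (H γ⁻¹) p.1) LinearMap.id)
              (D.Δ γ⁻¹ γ p.2)) := by
      intro p
      obtain ⟨tp, htp⟩ := TensorProduct.exists_finset (D.Δ γ⁻¹ γ p.2)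
      have hΔmul : D.Δ γ⁻¹ γ (p.2 * q.2)
          = ∑ o ∈ tp, ∑ r ∈ tq, (o.1 * r.1) ⊗ₜ[k] (o.2 * r.2) := by
        rw [map_mul, htp, htq, Finset.sum_mul_sum]
        simp only [Algebra.TensorProduct.tmul_mul_tmul]
      -- LHS
      rw [hgdef]
      simp only [LinearMap.comp_apply, AlgHom.toLinearMap_apply]
      rw [hΔmul, map_sum, map_sum]
      simp only [map_sum, TensorProduct.map_tmul, LinearMap.id_apply, LinearMap.mul'_apply]
      -- RHS
      rw [htp, map_sum, map_sum]
      simp only [TensorProduct.map_tmul, LinearMap.id_apply, LinearMap.comp_apply,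
        TensorProduct.mk_apply, hFal, hCq, hGq, LinearMap.mul'_apply, LinearMap.sum_apply,
        LinearMap.mulLeft_apply, LinearMap.mulRight_apply, Finset.mul_sum, Finset.sum_mul]
      refine Finset.sum_congr rfl fun o _ => Finset.sum_congr rfl fun r _ => ?_
      simp only [mul_assoc]
    rw [Finset.sum_congr rfl fun p _ => perp p, ← map_sum,
      D.key' γ (mul_inv_cancel γ) Fal hFalΔ hc (castAlg k h0 x) sx
        (fun p => p.1) (fun p => p.2) hsx, castAlg_castAlg, castAlg_refl]
    -- Cq (1 ⊗ x) = C' (map (Fal ∘ mk q.1) id (Δ q.2))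
    rw [htq, map_sum]
    simp only [hCq, hC', hGq, TensorProduct.map_tmul, LinearMap.comp_apply,
      TensorProduct.mk_apply, hFal, LinearMap.mul'_apply, LinearMap.sum_apply,
      LinearMap.mulLeft_apply, LinearMap.mulRight_apply, LinearMap.id_apply,
      map_sum, one_mul, mul_one, Finset.mul_sum]
    refine Finset.sum_congr rfl fun r _ => ?_
    simp only [mul_assoc]
  -- step 3: outer collapse
  rw [e1, Finset.sum_congr rfl fun q _ => e2 q, ← map_sum,
    D.key' γ (mul_inv_cancel γ) Fal hFalΔ hc (castAlg k h0 y) sy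
      (fun p => p.1) (fun p => p.2) hsy, castAlg_castAlg, castAlg_refl]
  simp only [hC', TensorProduct.map_tmul, LinearMap.comp_apply, LinearMap.id_apply,
    LinearMap.mul'_apply, LinearMap.mulLeft_apply, one_mul]

end HopfGCoalgebra
namespace HopfGCoalgebra
variable {k G : Type} [Field k] [Group G] {H : G → Type}
  [∀ γ : G, Ring (H γ)] [∀ γ : G, Algebra k (H γ)]
variable (D : HopfGCoalgebra k G H)
variable (Sinv : ∀ γ : G, H γ⁻¹ →ₗ[k] H γ)
variable (hSinv : ∀ (γ : G) (x : H γ), Sinv γ (D.S γ x) = x)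
variable (hSinv' : ∀ (γ : G) (y : H γ⁻¹), D.S γ (Sinv γ y) = y)
include hSinv hSinv'

/-- `∑ S⁻¹(u₍₂₎) u₍₁₎ = ε(u) 1` for `u ∈ H (α α⁻¹)`. -/
lemma inv_antipode_left (α : G) (u : H (α * α⁻¹)) :
    (LinearMap.mul' k (H α) ∘ₗ TensorProduct.map (Sinv α) LinearMap.id
      ∘ₗ (TensorProduct.comm k (H α) (H α⁻¹)).toLinearMap) (D.Δ α α⁻¹ u)
      = D.ε (castAlg k (mul_inv_cancel α) u) • (1 : H α) := by
  classical
  obtain ⟨s, hs⟩ := TensorProduct.exists_finset (D.Δ α α⁻¹ u)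
  have key0 : D.S α ((LinearMap.mul' k (H α) ∘ₗ TensorProduct.map (Sinv α) LinearMap.id
      ∘ₗ (TensorProduct.comm k (H α) (H α⁻¹)).toLinearMap) (D.Δ α α⁻¹ u))
      = D.S α (D.ε (castAlg k (mul_inv_cancel α) u) • (1 : H α)) := by
    rw [map_smul, D.S_one]
    have h2 := D.antipode_left' α u
    rw [hs] at h2 ⊢
    simp only [map_sum, LinearMap.comp_apply, LinearEquiv.coe_coe, TensorProduct.comm_tmul,
      TensorProduct.map_tmul, LinearMap.id_apply, LinearMap.mul'_apply] at h2 ⊢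
    calc ∑ p ∈ s, D.S α (Sinv α p.2 * p.1)
        = ∑ p ∈ s, D.S α p.1 * p.2 := by
          refine Finset.sum_congr rfl fun p _ => ?_
          rw [D.S_mul, hSinv']
      _ = _ := h2
  have := congrArg (Sinv α) key0
  rwa [hSinv, hSinv] at this

/-- `∑ v₍₂₎ S⁻¹(v₍₁₎) = ε(v) 1` for `v ∈ H (α⁻¹ α)`. -/
lemma inv_antipode_right (α : G) (v : H (α⁻¹ * α)) :
    (LinearMap.mul' k (H α) ∘ₗ TensorProduct.map LinearMap.id (Sinv α)
      ∘ₗ (TensorProduct.comm k (H α⁻¹) (H α)).toLinearMap) (D.Δ α⁻¹ α v)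
      = D.ε (castAlg k (inv_mul_cancel α) v) • (1 : H α) := by
  classical
  obtain ⟨s, hs⟩ := TensorProduct.exists_finset (D.Δ α⁻¹ α v)
  have key0 : D.S α ((LinearMap.mul' k (H α) ∘ₗ TensorProduct.map LinearMap.id (Sinv α)
      ∘ₗ (TensorProduct.comm k (H α⁻¹) (H α)).toLinearMap) (D.Δ α⁻¹ α v))
      = D.S α (D.ε (castAlg k (inv_mul_cancel α) v) • (1 : H α)) := by
    rw [map_smul, D.S_one]
    have h2 := D.antipode_right' α v
    rw [hs] at h2 ⊢
    simp only [map_sum, LinearMap.comp_apply, LinearEquiv.coe_coe, TensorProduct.comm_tmul,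
      TensorProduct.map_tmul, LinearMap.id_apply, LinearMap.mul'_apply] at h2 ⊢
    calc ∑ p ∈ s, D.S α (p.2 * Sinv α p.1)
        = ∑ p ∈ s, p.1 * D.S α p.2 := by
          refine Finset.sum_congr rfl fun p _ => ?_
          rw [D.S_mul, hSinv']
      _ = _ := h2
  have := congrArg (Sinv α) key0
  rwa [hSinv, hSinv] at this

end HopfGCoalgebra

open HopfGCoalgebra in
/-- The map `φ^l_{α,β} : H_α ⊗ H_{αβ} → H_α ⊗ H_β, m ⊗ h ↦ h₍₁₎m ⊗ h₍₂₎` is an isomorphism of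
`H_{αβ}`-modules (where `H_{αβ}` acts on the source by left multiplication on the second factor
and on the target through `Δ_{α,β}`), with inverse
`ψ^l_{α,β} : x ⊗ y ↦ S_α⁻¹(y₍₁₎)x ⊗ y₍₂₎`, `S_α⁻¹` being the inverse of the antipode `S_α`. -/
theorem phi_left_isom_of_modules
    {k G : Type} [Field k] [Group G] {H : G → Type}
    [∀ γ : G, Ring (H γ)] [∀ γ : G, Algebra k (H γ)]
    (D : HopfGCoalgebra k G H)
    (Sinv : ∀ γ : G, H γ⁻¹ →ₗ[k] H γ)
    (hSinv : ∀ (γ : G) (x : H γ), Sinv γ (D.S γ x) = x)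
    (hSinv' : ∀ (γ : G) (y : H γ⁻¹), D.S γ (Sinv γ y) = y)
    (α β : G)
    (φ : (H α ⊗[k] H (α * β)) →ₗ[k] (H α ⊗[k] H β))
    (ψ : (H α ⊗[k] H β) →ₗ[k] (H α ⊗[k] H (α * β)))
    (hφ : ∀ (m : H α) (h : H (α * β)),
      φ (m ⊗ₜ[k] h) = D.Δ α β h * (m ⊗ₜ[k] (1 : H β)))
    (hψ : ∀ (x : H α) (y : H β),
      ψ (x ⊗ₜ[k] y)
        = (TensorProduct.map (LinearMap.mulRight k x ∘ₗ Sinv α) LinearMap.id)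
          (D.Δ α⁻¹ (α * β) (castAlg k (inv_mul_cancel_left α β).symm y))) :
    (∀ (h : H (α * β)) (z : H α ⊗[k] H (α * β)),
        φ ((TensorProduct.map LinearMap.id (LinearMap.mulLeft k h)) z) = D.Δ α β h * φ z)
    ∧ φ.comp ψ = LinearMap.id ∧ ψ.comp φ = LinearMap.id := by
  classical
  refine ⟨?_, ?_, ?_⟩
  · -- module map property
    intro h z
    induction z with
    | zero => simp
    | tmul m x =>
        rw [TensorProduct.map_tmul, LinearMap.id_apply, LinearMap.mulLeft_apply, hφ, hφ,
          map_mul, mul_assoc]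
    | add z1 z2 h1 h2 => rw [map_add, map_add, map_add, mul_add, h1, h2]
  · -- φ ∘ ψ = id
    apply TensorProduct.ext'
    intro x y
    rw [LinearMap.comp_apply, LinearMap.id_apply, hψ]
    set F₄ : (H α⁻¹ ⊗[k] H α) →ₗ[k] H α :=
      LinearMap.mul' k (H α) ∘ₗ TensorProduct.map LinearMap.id (Sinv α)
        ∘ₗ (TensorProduct.comm k (H α⁻¹) (H α)).toLinearMap with hF₄
    obtain ⟨s, hs⟩ := TensorProduct.exists_finset
      (D.Δ α⁻¹ (α * β) (castAlg k (inv_mul_cancel_left α β).symm y))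
    rw [hs, map_sum, map_sum]
    simp only [TensorProduct.map_tmul, LinearMap.comp_apply, LinearMap.id_apply,
      LinearMap.mulRight_apply]
    have hterm : ∀ p : H α⁻¹ × H (α * β),
        φ ((Sinv α p.1 * x) ⊗ₜ[k] p.2)
          = ((TensorProduct.map (F₄ ∘ₗ TensorProduct.mk k (H α⁻¹) (H α) p.1) LinearMap.id)
              (D.Δ α β p.2)) * (x ⊗ₜ[k] (1 : H β)) := by
      intro p
      rw [hφ]
      have hmr : F₄ ∘ₗ TensorProduct.mk k (H α⁻¹) (H α) p.1
          = LinearMap.mulRight k (Sinv α p.1) := by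
        ext b
        simp [hF₄]
      rw [hmr, Hmul]
      rw [mul_assoc, Algebra.TensorProduct.tmul_mul_tmul, one_mul]
    rw [Finset.sum_congr rfl fun p _ => hterm p, ← Finset.sum_mul,
      D.key' β (inv_mul_cancel α) F₄ (fun v => D.inv_antipode_right Sinv hSinv hSinv' α v)
        (inv_mul_cancel_left α β) (castAlg k (inv_mul_cancel_left α β).symm y) s
        (fun p => p.1) (fun p => p.2) hs,
      castAlg_castAlg, castAlg_refl, Algebra.TensorProduct.tmul_mul_tmul, one_mul, mul_one]
  · -- ψ ∘ φ = id
    apply TensorProduct.ext'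
    intro m h
    rw [LinearMap.comp_apply, LinearMap.id_apply, hφ]
    set F₃ : (H α ⊗[k] H α⁻¹) →ₗ[k] H α :=
      LinearMap.mul' k (H α) ∘ₗ TensorProduct.map (Sinv α) LinearMap.id
        ∘ₗ (TensorProduct.comm k (H α) (H α⁻¹)).toLinearMap with hF₃
    have hb : β = α⁻¹ * (α * β) := (inv_mul_cancel_left α β).symm
    have hx : α * β = α * (α⁻¹ * (α * β)) := by rw [← hb]
    obtain ⟨s, hs⟩ := TensorProduct.exists_finset (D.Δ α β h)
    have hs' : D.Δ α (α⁻¹ * (α * β)) (castAlg k hx h)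
        = ∑ p ∈ s, p.1 ⊗ₜ[k] castAlg k hb p.2 := by
      rw [D.Δ_cast rfl hb hx h, hs, map_sum]
      simp only [TensorProduct.map_tmul, castAlg_toLinearMap_refl, LinearMap.id_apply,
        AlgEquiv.toLinearMap_apply]
    rw [hs, Finset.sum_mul]
    simp only [Algebra.TensorProduct.tmul_mul_tmul, mul_one]
    rw [map_sum]
    have hterm : ∀ p : H α × H β,
        ψ ((p.1 * m) ⊗ₜ[k] p.2)
          = (TensorProduct.map (LinearMap.mulRight k m) LinearMap.id)
              ((TensorProduct.map (F₃ ∘ₗ TensorProduct.mk k (H α) (H α⁻¹) p.1) LinearMap.id)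
                (D.Δ α⁻¹ (α * β) (castAlg k hb p.2))) := by
      intro p
      rw [hψ]
      have Hc : ∀ t : H α⁻¹ ⊗[k] H (α * β),
          (TensorProduct.map (LinearMap.mulRight k (p.1 * m) ∘ₗ Sinv α) LinearMap.id) t
          = (TensorProduct.map (LinearMap.mulRight k m) LinearMap.id)
              ((TensorProduct.map (F₃ ∘ₗ TensorProduct.mk k (H α) (H α⁻¹) p.1)
                  LinearMap.id) t) := by
        intro t
        induction t with
        | zero => simp
        | tmul b c => simp [hF₃, mul_assoc]
        | add u v hu hv =>
            rw [map_add, map_add, map_add, hu, hv]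
      rw [Hc]
    rw [Finset.sum_congr rfl fun p _ => hterm p, ← map_sum,
      D.key' (α * β) (mul_inv_cancel α) F₃ (fun v => D.inv_antipode_left Sinv hSinv hSinv' α v)
        (by rw [← hx] : α * (α⁻¹ * (α * β)) = α * β) (castAlg k hx h) s
        (fun p => p.1) (fun p => castAlg k hb p.2) hs',
      castAlg_castAlg, castAlg_refl, TensorProduct.map_tmul, LinearMap.id_apply,
      LinearMap.mulRight_apply, one_mul]
end

section
/- Let (H, g) be a pivotal Hopf G-coalgebra over a field k, let μ be a right G-integral for H, and let μ̃_α(x) := μ_α(g_α x) be the associated symmetrised right G-integral. Then for all α, β ∈ G, x ∈ H_α and y ∈ H_β one has μ̃_{αβ}(x_{(1)}) · S_{β⁻¹}(x_{(2)}) y = μ̃_α(x) · g_β y in H_β, where Δ_{αβ,β⁻¹}(x) = x_{(1)} ⊗ x_{(2)} (using H_α = H_{(αβ)β⁻¹}). -/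
open scoped TensorProduct

section Aux

variable {k G : Type} [Field k] [Group G] {H : G → Type}
  [∀ γ : G, Ring (H γ)] [∀ γ : G, Algebra k (H γ)]

lemma castAlg_rfl {γ : G} (h : γ = γ) (x : H γ) : castAlg k h x = x := rfl

lemma castAlg_trans {γ γ' γ'' : G} (h : γ = γ') (h' : γ' = γ'') (x : H γ) :
    castAlg k h' (castAlg k h x) = castAlg (H := H) k (h.trans h') x := by
  subst h; subst h'; rfl

lemma fam_cast (μ : ∀ γ : G, H γ →ₗ[k] k) {γ γ' : G} (h : γ = γ') (x : H γ) :
    μ γ' (castAlg k h x) = μ γ x := by subst h; rfl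

lemma unit_cast (u : ∀ γ : G, (H γ)ˣ) {γ γ' : G} (h : γ = γ') :
    castAlg (H := H) k h ↑(u γ) = ↑(u γ') := by subst h; rfl

lemma unit_inv_cast (u : ∀ γ : G, (H γ)ˣ) {γ γ' : G} (h : γ = γ') :
    castAlg (H := H) k h ↑(u γ)⁻¹ = ↑(u γ')⁻¹ := by subst h; rfl

lemma S_cast (D : HopfGCoalgebra k G H) {γ γ' : G} (h : γ = γ') (x : H γ) :
    D.S γ' (castAlg k h x) = castAlg k (congrArg Inv.inv h) (D.S γ x) := by
  subst h; rfl

lemma S_g (D : HopfGCoalgebra k G H) (g : ∀ γ : G, (H γ)ˣ)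
    (hpiv : D.IsPivot g) (α : G) :
    castAlg (H := H) k (inv_inv α) (D.S α⁻¹ ↑(g α⁻¹)) = ↑(g α)⁻¹ := by
  have h1 := D.antipode_left α ↑(g (α⁻¹ * α))
  rw [hpiv.delta α⁻¹ α, TensorProduct.map_tmul, LinearMap.mul'_apply,
    unit_cast (H := H) g (inv_mul_cancel α), hpiv.counit, one_smul] at h1
  have h2 : ((castAlg (H := H) k (inv_inv α)).toLinearMap ∘ₗ D.S α⁻¹) ↑(g α⁻¹)
      = castAlg (H := H) k (inv_inv α) (D.S α⁻¹ ↑(g α⁻¹)) := rfl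
  rw [h2, LinearMap.id_apply] at h1
  calc castAlg (H := H) k (inv_inv α) (D.S α⁻¹ ↑(g α⁻¹))
      = castAlg (H := H) k (inv_inv α) (D.S α⁻¹ ↑(g α⁻¹)) * ↑(g α) * ↑(g α)⁻¹ := by
        rw [Units.mul_inv_cancel_right]
    _ = ↑(g α)⁻¹ := by rw [h1, one_mul]

lemma S_g_inv (D : HopfGCoalgebra k G H) (g : ∀ γ : G, (H γ)ˣ)
    (hpiv : D.IsPivot g) (β : G) :
    castAlg (H := H) k (inv_inv β) (D.S β⁻¹ ↑(g β⁻¹)⁻¹) = ↑(g β) := by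
  have hS : D.S β ↑(g β) = ↑(g β⁻¹)⁻¹ := by
    have hA := S_g D g hpiv β⁻¹
    rw [← unit_cast (k := k) (H := H) g (inv_inv β).symm, S_cast, castAlg_trans,
      castAlg_rfl] at hA
    exact hA
  have h2 := hpiv.antipode β ↑(g β)
  rw [hS, Units.mul_inv_cancel_right] at h2
  exact h2

end Aux

open HopfGCoalgebra in
/-- The defining relation of the symmetrised right `G`-integral:
`μ̃_{αβ}(x₍₁₎) · S_{β⁻¹}(x₍₂₎) y = μ̃_α(x) · g_β y`, where
`Δ_{αβ,β⁻¹}(x) = x₍₁₎ ⊗ x₍₂₎` for `x ∈ H_α = H_{(αβ)β⁻¹}`. -/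
theorem symmetrised_right_integral_relation
    {k G : Type} [Field k] [Group G] {H : G → Type}
    [∀ γ : G, Ring (H γ)] [∀ γ : G, Algebra k (H γ)]
    (D : HopfGCoalgebra k G H) (g : ∀ γ : G, (H γ)ˣ) (hpiv : D.IsPivot g)
    (μ : ∀ γ : G, H γ →ₗ[k] k) (hμ : D.IsRightIntegral μ) :
    ∀ (α β : G) (x : H α) (y : H β),
      (TensorProduct.lid k (H β))
        ((TensorProduct.map
            (μ (α * β) ∘ₗ LinearMap.mulLeft k ((g (α * β) : H (α * β))))
            (LinearMap.mulRight k y ∘ₗ (castAlg k (inv_inv β)).toLinearMap ∘ₗ D.S β⁻¹))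
          (D.Δ (α * β) β⁻¹ (castAlg k (mul_inv_cancel_right α β).symm x)))
        = μ α ((g α : H α) * x) • ((g β : H β) * y) := by
  intro α β x y
  classical
  set h' : α = (α * β) * β⁻¹ := (mul_inv_cancel_right α β).symm with hh'
  set T : H β⁻¹ →ₗ[k] H β :=
    LinearMap.mulRight k y ∘ₗ (castAlg (H := H) k (inv_inv β)).toLinearMap
      ∘ₗ D.S β⁻¹ ∘ₗ LinearMap.mulLeft k (↑(g β⁻¹)⁻¹ : H β⁻¹) with hT
  have key : ∀ t : H (α * β) ⊗[k] H β⁻¹,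
      (TensorProduct.lid k (H β))
        ((TensorProduct.map
            (μ (α * β) ∘ₗ LinearMap.mulLeft k ((g (α * β) : H (α * β))))
            (LinearMap.mulRight k y ∘ₗ (castAlg k (inv_inv β)).toLinearMap ∘ₗ D.S β⁻¹)) t)
      = T ((TensorProduct.lid k (H β⁻¹))
            ((TensorProduct.map (μ (α * β)) LinearMap.id)
              (((g (α * β) : H (α * β)) ⊗ₜ[k] (g β⁻¹ : H β⁻¹)) * t))) := by
    intro t
    induction t using TensorProduct.induction_on with
    | zero => simp
    | tmul a b =>
        simp only [Algebra.TensorProduct.tmul_mul_tmul, TensorProduct.map_tmul,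
          TensorProduct.lid_tmul, hT, LinearMap.coe_comp, Function.comp_apply,
          LinearMap.mulLeft_apply, LinearMap.mulRight_apply, LinearMap.id_apply,
          AlgEquiv.toLinearMap_apply, map_smul, Units.inv_mul_cancel_left]
    | add s t hs ht =>
        simp only [mul_add, map_add, hs, ht]
  have hΔ : D.Δ (α * β) β⁻¹ (castAlg k h' (↑(g α) * x))
      = ((g (α * β) : H (α * β)) ⊗ₜ[k] (g β⁻¹ : H β⁻¹))
          * D.Δ (α * β) β⁻¹ (castAlg k h' x) := by
    rw [map_mul, unit_cast (H := H) g h', map_mul, hpiv.delta (α * β) β⁻¹]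
  rw [key (D.Δ (α * β) β⁻¹ (castAlg k h' x)), ← hΔ, hμ (α * β) β⁻¹, map_smul,
    fam_cast μ h']
  congr 1
  rw [hT]
  simp only [LinearMap.coe_comp, Function.comp_apply, LinearMap.mulLeft_apply,
    LinearMap.mulRight_apply, AlgEquiv.toLinearMap_apply, mul_one]
  rw [S_g_inv D g hpiv β]
end
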